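/- Under the stated hypotheses, the following quantitative lower bound holds: Corr(P, Q | ψ†, φ‡; λ) ≥ Corr(P, Q) + (1/2)(λ − 1/β†) ∫ ‖∇ψ†(∇φ‡(y)) − y‖² dQ(y) + (1/2) ∫ ‖(1/√β†)(∇ψ†(∇φ‡(y)) − y) + √β† (∇φ*(y) − ∇φ‡(y))‖² dQ(y). -/

import Mathlib

open MeasureTheory ENNReal
open scoped RealInnerProductSpace

section Aux

variable {E : Type*} [NormedAddCommGroup E] [InnerProductSpace ℝ E] [CompleteSpace E]

/-- For a convex function on ℝ differentiable at 0, the tangent line at 0 lies below at 1. -/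
lemma aux_convexOn_deriv_le {g : ℝ → ℝ} (hg : ConvexOn ℝ Set.univ g) {g' : ℝ}
    (hd : HasDerivAt g g' 0) : g 0 + g' ≤ g 1 := by
  have key : ∀ t ∈ Set.Ioc (0:ℝ) 1, slope g 0 t ≤ g 1 - g 0 := by
    intro t ht
    have h := hg.2 (Set.mem_univ (0:ℝ)) (Set.mem_univ (1:ℝ))
      (by linarith [ht.2] : (0:ℝ) ≤ 1 - t) ht.1.le (by ring)
    simp only [smul_eq_mul, mul_zero, mul_one, zero_add] at h
    rw [slope_def_field, sub_zero, div_le_iff₀ ht.1]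
    linarith
  have hslope : Filter.Tendsto (slope g 0) (nhdsWithin 0 (Set.Ioi 0)) (nhds g') :=
    (hasDerivAt_iff_tendsto_slope.mp hd).mono_left
      (nhdsWithin_mono 0 (fun x hx => ne_of_gt hx))
  have hle : g' ≤ g 1 - g 0 :=
    le_of_tendsto hslope (Filter.eventually_of_mem
      (Ioc_mem_nhdsGT_of_mem ⟨le_refl (0:ℝ), zero_lt_one⟩) key)
  linarith

/-- First-order condition for a convex differentiable function. -/
lemma aux_convexOn_gradient_le {f : E → ℝ} (hc : ConvexOn ℝ Set.univ f) {b : E}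
    (hb : DifferentiableAt ℝ f b) (a : E) :
    f b + ⟪gradient f b, a - b⟫ ≤ f a := by
  set v := a - b with hv
  set g : ℝ → ℝ := fun t => f (b + t • v) with hg
  have hgc : ConvexOn ℝ Set.univ g := by
    refine ⟨convex_univ, fun x _ y _ p q hp hq hpq => ?_⟩
    have harg : b + (p • x + q • y) • v = p • (b + x • v) + q • (b + y • v) := by
      have h2 : p • (b + x • v) + q • (b + y • v) = (p + q) • b + (p • x + q • y) • v := by
        simp only [smul_eq_mul, smul_add, add_smul, mul_smul]
        abel
      rw [h2, hpq, one_smul]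
    show f (b + (p • x + q • y) • v) ≤ p • f (b + x • v) + q • f (b + y • v)
    rw [harg]
    exact hc.2 (Set.mem_univ _) (Set.mem_univ _) hp hq hpq
  have hline : HasDerivAt (fun t : ℝ => b + t • v) v 0 := by
    simpa using ((hasDerivAt_id (0:ℝ)).smul_const v).const_add b
  have hF : HasFDerivAt f (InnerProductSpace.toDual ℝ E (gradient f b)) b :=
    hasGradientAt_iff_hasFDerivAt.mp hb.hasGradientAt
  have hF' : HasFDerivAt f (InnerProductSpace.toDual ℝ E (gradient f b))
      ((fun t : ℝ => b + t • v) 0) := by simpa using hF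
  have hderiv : HasDerivAt g ⟪gradient f b, v⟫ 0 := by
    have := hF'.comp_hasDerivAt 0 hline
    simpa [hg, InnerProductSpace.toDual_apply_apply, Function.comp_def] using this
  have h01 := aux_convexOn_deriv_le hgc hderiv
  have e0 : g 0 = f b := by simp [hg]
  have e1 : g 1 = f a := by simp [hg, hv]
  rw [e0, e1] at h01
  exact h01

/-- First-order condition for a strongly convex differentiable function. -/
lemma aux_strong_gradient_le {f : E → ℝ} {β : ℝ} (hf : Differentiable ℝ f)
    (hc : ConvexOn ℝ Set.univ (fun x => f x - β / 2 * ‖x‖ ^ 2)) (a b : E) :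
    f b + ⟪gradient f b, a - b⟫ + β / 2 * ‖a - b‖ ^ 2 ≤ f a := by
  have hq : HasFDerivAt (fun x : E => β / 2 * ‖x‖ ^ 2)
      ((β / 2) • (2 • (innerSL ℝ b).comp (ContinuousLinearMap.id ℝ E))) b :=
    ((hasFDerivAt_id b).norm_sq).const_mul (β / 2)
  have hfd : HasFDerivAt f (InnerProductSpace.toDual ℝ E (gradient f b)) b :=
    hasGradientAt_iff_hasFDerivAt.mp (hf b).hasGradientAt
  have hh : HasFDerivAt (fun x => f x - β / 2 * ‖x‖ ^ 2)
      (InnerProductSpace.toDual ℝ E (gradient f b - β • b)) b := by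
    have h := hfd.sub hq
    refine h.congr_fderiv ?_
    ext z
    simp [inner_sub_left, real_inner_smul_left]
    ring
  have hgrad : HasGradientAt (fun x => f x - β / 2 * ‖x‖ ^ 2) (gradient f b - β • b) b :=
    hasGradientAt_iff_hasFDerivAt.mpr hh
  have key := aux_convexOn_gradient_le hc hgrad.differentiableAt a
  rw [hgrad.gradient] at key
  have h1 : ⟪gradient f b - β • b, a - b⟫
      = ⟪gradient f b, a - b⟫ - β * ⟪a, b⟫ + β * ‖b‖ ^ 2 := by
    simp only [inner_sub_left, inner_sub_right, real_inner_smul_left]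
    rw [real_inner_self_eq_norm_sq, real_inner_comm b a]
    ring
  have h2 : ‖a - b‖ ^ 2 = ‖a‖ ^ 2 - 2 * ⟪a, b⟫ + ‖b‖ ^ 2 := norm_sub_sq_real a b
  rw [h1] at key
  rw [h2]
  linarith

/-- The pointwise key inequality. -/
lemma aux_key {ψd : E → ℝ} {βd : ℝ} (lam : ℝ) (hβd : 0 < βd)
    (hψd : Differentiable ℝ ψd)
    (hstrong : ConvexOn ℝ Set.univ (fun x => ψd x - βd / 2 * ‖x‖ ^ 2))
    (T g y : E) :
    ⟪y, T⟫ + 1 / 2 * (lam - 1 / βd) * ‖gradient ψd g - y‖ ^ 2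
      + 1 / 2 * ‖(1 / Real.sqrt βd) • (gradient ψd g - y) + Real.sqrt βd • (T - g)‖ ^ 2 ≤
    ψd T + (⟪g, y⟫ - ψd g) + lam / 2 * ‖gradient ψd g - y‖ ^ 2 := by
  have hsc := aux_strong_gradient_le hψd hstrong T g
  have hs0 : Real.sqrt βd ≠ 0 := ne_of_gt (Real.sqrt_pos.mpr hβd)
  have hs2 : Real.sqrt βd ^ 2 = βd := Real.sq_sqrt hβd.le
  have hw : ‖(1 / Real.sqrt βd) • (gradient ψd g - y) + Real.sqrt βd • (T - g)‖ ^ 2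
      = (1 / βd) * ‖gradient ψd g - y‖ ^ 2 + 2 * ⟪gradient ψd g - y, T - g⟫
        + βd * ‖T - g‖ ^ 2 := by
    rw [norm_add_sq_real, norm_smul, norm_smul, real_inner_smul_left, real_inner_smul_right,
      Real.norm_eq_abs, Real.norm_eq_abs, mul_pow, mul_pow, sq_abs, sq_abs, hs2, div_pow,
      one_pow, hs2]
    rw [show (2:ℝ) * (1 / Real.sqrt βd * (Real.sqrt βd * ⟪gradient ψd g - y, T - g⟫))
        = 2 * ⟪gradient ψd g - y, T - g⟫ by
      field_simp]
  have hi : ⟪gradient ψd g - y, T - g⟫ = ⟪gradient ψd g, T - g⟫ - ⟪y, T⟫ + ⟪y, g⟫ := by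
    simp only [inner_sub_left, inner_sub_right]
    ring
  have hgy : ⟪g, y⟫ = ⟪y, g⟫ := real_inner_comm y g
  rw [hw, hi]
  have h1βd : 1 / βd > 0 := by positivity
  linarith [hsc, hgy]

end Aux

/-- Quantitative lower bound for the regularized correlations. -/
theorem regularized_corr_quantitative_lower_bound {D : ℕ}
    (P Q : Measure (EuclideanSpace ℝ (Fin D)))
    [IsProbabilityMeasure P] [IsProbabilityMeasure Q]
    (hP2 : Integrable (fun x => ‖x‖ ^ 2) P)
    (hQ2 : Integrable (fun y => ‖y‖ ^ 2) Q)
    -- Brenier potentials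
    (ψs φs : EuclideanSpace ℝ (Fin D) → ℝ)
    (hψs : Differentiable ℝ ψs) (hψsc : ConvexOn ℝ Set.univ ψs)
    (hφs : Differentiable ℝ φs) (hφsc : ConvexOn ℝ Set.univ φs)
    (hinv : ∀ y, gradient ψs (gradient φs y) = y)
    (hQP : Q.map (gradient φs) = P)
    (hPQ : P.map (gradient ψs) = Q)
    -- discriminators
    (ψd : EuclideanSpace ℝ (Fin D) → ℝ) (hψd : Differentiable ℝ ψd)
    (βd : ℝ) (hβd : 0 < βd)
    (hstrong : ConvexOn ℝ Set.univ (fun x => ψd x - βd / 2 * ‖x‖ ^ 2))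
    (φc : EuclideanSpace ℝ (Fin D) → ℝ) (hφc : Differentiable ℝ φc)
    (hφcc : ConvexOn ℝ Set.univ φc)
    (lam : ℝ) (hlam : 1 / βd < lam)
    -- integrability of all the integrals involved
    (hI1 : Integrable ψd P)
    (hI2 : Integrable (fun y => ⟪gradient φc y, y⟫ - ψd (gradient φc y)) Q)
    (hI3 : Integrable (fun y => ‖gradient ψd (gradient φc y) - y‖ ^ 2) Q)
    (hI4 : Integrable (fun y => ⟪y, gradient φs y⟫) Q)
    (hI5 : Integrable (fun y =>
      ‖(1 / Real.sqrt βd) • (gradient ψd (gradient φc y) - y)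
        + Real.sqrt βd • (gradient φs y - gradient φc y)‖ ^ 2) Q) :
    (∫ y, ⟪y, gradient φs y⟫ ∂Q)
      + 1 / 2 * (lam - 1 / βd) * (∫ y, ‖gradient ψd (gradient φc y) - y‖ ^ 2 ∂Q)
      + 1 / 2 * (∫ y, ‖(1 / Real.sqrt βd) • (gradient ψd (gradient φc y) - y)
          + Real.sqrt βd • (gradient φs y - gradient φc y)‖ ^ 2 ∂Q) ≤
    (∫ x, ψd x ∂P) + (∫ y, (⟪gradient φc y, y⟫ - ψd (gradient φc y)) ∂Q)
        + lam / 2 * ∫ y, ‖gradient ψd (gradient φc y) - y‖ ^ 2 ∂Q := by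
  have hmeas : Measurable (gradient φs) := by
    have he : gradient φs
        = fun x => (InnerProductSpace.toDual ℝ (EuclideanSpace ℝ (Fin D))).symm
          (fderiv ℝ φs x) := rfl
    rw [he]
    exact ((InnerProductSpace.toDual ℝ
      (EuclideanSpace ℝ (Fin D))).symm.continuous.measurable).comp (measurable_fderiv ℝ φs)
  have hP : (∫ x, ψd x ∂P) = ∫ y, ψd (gradient φs y) ∂Q := by
    rw [← hQP, integral_map hmeas.aemeasurable hψd.continuous.aestronglyMeasurable]
  have hIψ : Integrable (fun y => ψd (gradient φs y)) Q := by
    have h := hI1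
    rw [← hQP] at h
    exact (integrable_map_measure hψd.continuous.aestronglyMeasurable hmeas.aemeasurable).mp h
  have hIa : Integrable (fun y => ⟪y, gradient φs y⟫
      + 1 / 2 * (lam - 1 / βd) * ‖gradient ψd (gradient φc y) - y‖ ^ 2) Q :=
    hI4.add (hI3.const_mul _)
  have hIb : Integrable (fun y => ⟪y, gradient φs y⟫
      + 1 / 2 * (lam - 1 / βd) * ‖gradient ψd (gradient φc y) - y‖ ^ 2
      + 1 / 2 * ‖(1 / Real.sqrt βd) • (gradient ψd (gradient φc y) - y)
        + Real.sqrt βd • (gradient φs y - gradient φc y)‖ ^ 2) Q :=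
    hIa.add (hI5.const_mul _)
  have hIc : Integrable (fun y => ψd (gradient φs y)
      + (⟪gradient φc y, y⟫ - ψd (gradient φc y))) Q := hIψ.add hI2
  have hId : Integrable (fun y => ψd (gradient φs y)
      + (⟪gradient φc y, y⟫ - ψd (gradient φc y))
      + lam / 2 * ‖gradient ψd (gradient φc y) - y‖ ^ 2) Q := hIc.add (hI3.const_mul _)
  have hL : (∫ y, (⟪y, gradient φs y⟫
        + 1 / 2 * (lam - 1 / βd) * ‖gradient ψd (gradient φc y) - y‖ ^ 2
        + 1 / 2 * ‖(1 / Real.sqrt βd) • (gradient ψd (gradient φc y) - y)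
          + Real.sqrt βd • (gradient φs y - gradient φc y)‖ ^ 2) ∂Q)
      = (∫ y, ⟪y, gradient φs y⟫ ∂Q)
        + 1 / 2 * (lam - 1 / βd) * (∫ y, ‖gradient ψd (gradient φc y) - y‖ ^ 2 ∂Q)
        + 1 / 2 * (∫ y, ‖(1 / Real.sqrt βd) • (gradient ψd (gradient φc y) - y)
          + Real.sqrt βd • (gradient φs y - gradient φc y)‖ ^ 2 ∂Q) := by
    rw [integral_add hIa (hI5.const_mul (1 / 2)),
      integral_add hI4 (hI3.const_mul (1 / 2 * (lam - 1 / βd))), integral_const_mul,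
      integral_const_mul]
  have hR : (∫ y, (ψd (gradient φs y) + (⟪gradient φc y, y⟫ - ψd (gradient φc y))
        + lam / 2 * ‖gradient ψd (gradient φc y) - y‖ ^ 2) ∂Q)
      = (∫ x, ψd x ∂P) + (∫ y, (⟪gradient φc y, y⟫ - ψd (gradient φc y)) ∂Q)
        + lam / 2 * ∫ y, ‖gradient ψd (gradient φc y) - y‖ ^ 2 ∂Q := by
    rw [integral_add hIc (hI3.const_mul (lam / 2)), integral_add hIψ hI2,
      integral_const_mul, hP]
  rw [← hL, ← hR]
  refine integral_mono hIb hId ?_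
  intro y
  exact aux_key lam hβd hψd hstrong (gradient φs y) (gradient φc y) y
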